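/- The matrix square root map h ↦ √h is differentiable on the open cone S^D_{++} of positive definite matrices, and its directional derivative D_{√h}(a) = lim_{ε→0} ε^{-1}(√(h+εa) − √h) satisfies the bound |D_{√h}(a)| ≤ C |a| |h^{-1}|^{1/2} for some absolute constant C (depending only on D), where |·| denotes the Frobenius norm and h^{-1} the matrix inverse. -/

import Mathlib

open Filter Topology

noncomputable def dotp {D : ℕ} (a b : Matrix (Fin D) (Fin D) ℝ) : ℝ :=
  ∑ i, ∑ j, a i j * b i j

noncomputable def frob {D : ℕ} (a : Matrix (Fin D) (Fin D) ℝ) : ℝ :=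
  Real.sqrt (dotp a a)

open Classical in
/-- The matrix square root, extended by `0` outside the PSD cone. -/
noncomputable def msqrt {D : ℕ} (h : Matrix (Fin D) (Fin D) ℝ) : Matrix (Fin D) (Fin D) ℝ :=
  if hp : h.PosSemidef then
    (hp.1.eigenvectorUnitary : Matrix (Fin D) (Fin D) ℝ) *
      Matrix.diagonal ((↑) ∘ (√·) ∘ hp.1.eigenvalues) *
      (star hp.1.eigenvectorUnitary : Matrix (Fin D) (Fin D) ℝ)
  else 0

open Classical in
/-- The matrix square root of a PSD matrix (the formula used in `msqrt`). -/
noncomputable def Matrix.PosSemidef.sqrt {D : ℕ} {h : Matrix (Fin D) (Fin D) ℝ}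
    (hp : h.PosSemidef) : Matrix (Fin D) (Fin D) ℝ :=
  (hp.1.eigenvectorUnitary : Matrix (Fin D) (Fin D) ℝ) *
    Matrix.diagonal ((↑) ∘ (√·) ∘ hp.1.eigenvalues) *
    (star hp.1.eigenvectorUnitary : Matrix (Fin D) (Fin D) ℝ)

section SqrtAPI
open scoped MatrixOrder

lemma Matrix.PosSemidef.sqrt_eq_cfc {D : ℕ} {h : Matrix (Fin D) (Fin D) ℝ}
    (hp : h.PosSemidef) : hp.sqrt = CFC.sqrt h := by
  rw [CFC.sqrt_eq_cfc, cfc_nnreal_eq_real _ h, hp.1.cfc_eq]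
  simp only [Matrix.IsHermitian.cfc, Unitary.conjStarAlgAut_apply, Matrix.PosSemidef.sqrt]
  congr 3
  funext i
  simp only [Function.comp_apply, Real.coe_sqrt, Real.coe_toNNReal', RCLike.ofReal_real_eq_id, id,
    max_eq_left (hp.eigenvalues_nonneg i)]

lemma Matrix.PosSemidef.sqrt_mul_self {D : ℕ} {h : Matrix (Fin D) (Fin D) ℝ}
    (hp : h.PosSemidef) : hp.sqrt * hp.sqrt = h := by
  rw [hp.sqrt_eq_cfc]; exact CFC.sqrt_mul_sqrt_self h hp.nonneg

lemma Matrix.PosSemidef.posSemidef_sqrt {D : ℕ} {h : Matrix (Fin D) (Fin D) ℝ}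
    (hp : h.PosSemidef) : hp.sqrt.PosSemidef := by
  rw [hp.sqrt_eq_cfc]; exact Matrix.nonneg_iff_posSemidef.mp (CFC.sqrt_nonneg h)

lemma Matrix.PosSemidef.eq_sqrt_of_sq_eq {D : ℕ} {A : Matrix (Fin D) (Fin D) ℝ}
    (hA : A.PosSemidef) {B : Matrix (Fin D) (Fin D) ℝ} (hB : B.PosSemidef) (hAB : A ^ 2 = B) :
    A = hB.sqrt := by
  rw [hB.sqrt_eq_cfc]
  exact ((CFC.sqrt_eq_iff B A hB.nonneg hA.nonneg).2 (by rw [← sq]; exact hAB)).symm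

end SqrtAPI


open Matrix


section Aux
variable {D : ℕ}

local notation "𝕄" => Matrix (Fin D) (Fin D) ℝ

lemma dotp_eq_trace (a b : 𝕄) : dotp a b = (aᵀ * b).trace := by
  simp only [dotp, Matrix.trace, Matrix.diag, Matrix.mul_apply, Matrix.transpose_apply]
  exact Finset.sum_comm

lemma dotp_self_nonneg (a : 𝕄) : 0 ≤ dotp a a :=
  Finset.sum_nonneg fun i _ => Finset.sum_nonneg fun j _ => mul_self_nonneg _

lemma frob_nonneg (a : 𝕄) : 0 ≤ frob a := Real.sqrt_nonneg _

lemma frob_sq (a : 𝕄) : frob a ^ 2 = dotp a a := Real.sq_sqrt (dotp_self_nonneg a)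

lemma eq_zero_of_dotp_self (a : 𝕄) (h : dotp a a = 0) : a = 0 := by
  ext i j
  have h1 : ∀ i ∈ (Finset.univ : Finset (Fin D)), (0:ℝ) ≤ ∑ j, a i j * a i j :=
    fun i _ => Finset.sum_nonneg fun j _ => mul_self_nonneg _
  have h2 := (Finset.sum_eq_zero_iff_of_nonneg h1).1 h i (Finset.mem_univ i)
  have h3 : ∀ j ∈ (Finset.univ : Finset (Fin D)), (0:ℝ) ≤ a i j * a i j :=
    fun j _ => mul_self_nonneg _
  have := (Finset.sum_eq_zero_iff_of_nonneg h3).1 h2 j (Finset.mem_univ j)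
  simpa [mul_self_eq_zero] using this

lemma dotp_le_frob (a b : 𝕄) : dotp a b ≤ frob a * frob b := by
  have key : (dotp a b) ^ 2 ≤ dotp a a * dotp b b := by
    have : dotp a b = ∑ p : Fin D × Fin D, a p.1 p.2 * b p.1 p.2 := by
      rw [Fintype.sum_prod_type]; rfl
    have ha : dotp a a = ∑ p : Fin D × Fin D, a p.1 p.2 ^ 2 := by
      rw [Fintype.sum_prod_type]; simp [dotp, sq]
    have hb : dotp b b = ∑ p : Fin D × Fin D, b p.1 p.2 ^ 2 := by
      rw [Fintype.sum_prod_type]; simp [dotp, sq]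
    rw [this, ha, hb]
    exact Finset.sum_mul_sq_le_sq_mul_sq _ _ _
  calc dotp a b ≤ Real.sqrt ((dotp a b) ^ 2) := by
        rw [Real.sqrt_sq_eq_abs]; exact le_abs_self _
    _ ≤ Real.sqrt (dotp a a * dotp b b) := Real.sqrt_le_sqrt key
    _ = frob a * frob b := by
        rw [Real.sqrt_mul (dotp_self_nonneg a)]; rfl

lemma frob_neg (a : 𝕄) : frob (-a) = frob a := by simp [frob, dotp]

lemma trace_le_sqrt_frob (m : 𝕄) : m.trace ≤ Real.sqrt (D : ℝ) * frob m := by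
  have h1 : m.trace ^ 2 ≤ (D : ℝ) * ∑ i, m i i ^ 2 := by
    simpa [Matrix.trace, Matrix.diag] using
      sq_sum_le_card_mul_sum_sq (s := (Finset.univ : Finset (Fin D))) (f := fun i => m i i)
  have h2 : ∑ i, m i i ^ 2 ≤ dotp m m := by
    apply Finset.sum_le_sum
    intro i _
    have : m i i ^ 2 = m i i * m i i := sq (m i i) ▸ by ring
    rw [this]
    exact Finset.single_le_sum (f := fun j => m i j * m i j)
      (fun j _ => mul_self_nonneg _) (Finset.mem_univ i)
  calc m.trace ≤ Real.sqrt (m.trace ^ 2) := by rw [Real.sqrt_sq_eq_abs]; exact le_abs_self _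
    _ ≤ Real.sqrt ((D:ℝ) * dotp m m) := Real.sqrt_le_sqrt (h1.trans (by
        exact mul_le_mul_of_nonneg_left h2 (Nat.cast_nonneg _)))
    _ = Real.sqrt (D:ℝ) * frob m := by rw [Real.sqrt_mul (Nat.cast_nonneg _)]; rfl

lemma frob_sq_symm {m : 𝕄} (hm : mᵀ = m) : frob m ^ 2 = (m * m).trace := by
  rw [frob_sq, dotp_eq_trace, hm]

end Aux
section Aux2
variable {D : ℕ}
local notation "𝕄" => Matrix (Fin D) (Fin D) ℝ

-- Cauchy–Schwarz for vectors
lemma dv_self_nonneg (x : Fin D → ℝ) : 0 ≤ x ⬝ᵥ x :=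
  Finset.sum_nonneg fun i _ => mul_self_nonneg _

lemma dv_le (x y : Fin D → ℝ) : x ⬝ᵥ y ≤ Real.sqrt (x ⬝ᵥ x) * Real.sqrt (y ⬝ᵥ y) := by
  have key : (x ⬝ᵥ y) ^ 2 ≤ (x ⬝ᵥ x) * (y ⬝ᵥ y) := by
    have hx : x ⬝ᵥ x = ∑ i, x i ^ 2 := by simp [dotProduct, sq]
    have hy : y ⬝ᵥ y = ∑ i, y i ^ 2 := by simp [dotProduct, sq]
    rw [hx, hy]
    exact Finset.sum_mul_sq_le_sq_mul_sq _ _ _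
  calc x ⬝ᵥ y ≤ Real.sqrt ((x ⬝ᵥ y) ^ 2) := by
        rw [Real.sqrt_sq_eq_abs]; exact le_abs_self _
    _ ≤ Real.sqrt ((x ⬝ᵥ x) * (y ⬝ᵥ y)) := Real.sqrt_le_sqrt key
    _ = _ := Real.sqrt_mul (dv_self_nonneg x) _

-- ‖m v‖² ≤ frob m ² ‖v‖²
lemma mulVec_dot_le (m : 𝕄) (v : Fin D → ℝ) :
    (m *ᵥ v) ⬝ᵥ (m *ᵥ v) ≤ frob m ^ 2 * (v ⬝ᵥ v) := by
  have : ∀ i, (m *ᵥ v) i ^ 2 ≤ (∑ j, m i j ^ 2) * (v ⬝ᵥ v) := by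
    intro i
    have : (m *ᵥ v) i = ∑ j, m i j * v j := rfl
    rw [this]
    have hv : v ⬝ᵥ v = ∑ j, v j ^ 2 := by simp [dotProduct, sq]
    rw [hv]
    exact Finset.sum_mul_sq_le_sq_mul_sq _ _ _
  calc (m *ᵥ v) ⬝ᵥ (m *ᵥ v) = ∑ i, (m *ᵥ v) i ^ 2 := by simp [dotProduct, sq]
    _ ≤ ∑ i, (∑ j, m i j ^ 2) * (v ⬝ᵥ v) := Finset.sum_le_sum fun i _ => this i
    _ = (∑ i, ∑ j, m i j ^ 2) * (v ⬝ᵥ v) := by rw [Finset.sum_mul]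
    _ = frob m ^ 2 * (v ⬝ᵥ v) := by
        rw [frob_sq]; congr 1; simp [dotp, sq]

-- quadratic form entrywise bound: v ⬝ᵥ (e *ᵥ v) ≥ -(frob e * (v ⬝ᵥ v))
lemma quad_lower (e : 𝕄) (v : Fin D → ℝ) :
    -(frob e * (v ⬝ᵥ v)) ≤ v ⬝ᵥ (e *ᵥ v) := by
  have key : ∀ (e' : 𝕄), v ⬝ᵥ (e' *ᵥ v) ≤ frob e' * (v ⬝ᵥ v) := by
    intro e'
    have h1 : v ⬝ᵥ (e' *ᵥ v) = dotp e' (Matrix.vecMulVec v v) := by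
      simp only [dotProduct, Matrix.mulVec, dotp, Matrix.vecMulVec_apply,
        dotProduct]
      congr 1; ext i
      rw [Finset.mul_sum]
      congr 1; ext j; ring
    have h2 : frob (Matrix.vecMulVec v v) = v ⬝ᵥ v := by
      have : dotp (Matrix.vecMulVec v v) (Matrix.vecMulVec v v) = (v ⬝ᵥ v) ^ 2 := by
        simp only [dotp, Matrix.vecMulVec_apply, dotProduct, sq]
        rw [Finset.sum_mul_sum]
        congr 1; ext i; congr 1; ext j; ring
      rw [frob, this, Real.sqrt_sq (dv_self_nonneg v)]
    calc v ⬝ᵥ (e' *ᵥ v) = dotp e' (Matrix.vecMulVec v v) := h1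
      _ ≤ frob e' * frob (Matrix.vecMulVec v v) := dotp_le_frob _ _
      _ = frob e' * (v ⬝ᵥ v) := by rw [h2]
  have := key (-e)
  have hneg : v ⬝ᵥ ((-e) *ᵥ v) = -(v ⬝ᵥ (e *ᵥ v)) := by
    simp [Matrix.neg_mulVec]
  rw [hneg, frob_neg] at this
  linarith

end Aux2

section Aux3
variable {D : ℕ}
local notation "𝕄" => Matrix (Fin D) (Fin D) ℝ

lemma isSymm_of_isHermitian {m : 𝕄} (hm : m.IsHermitian) : mᵀ = m := by
  rw [← Matrix.conjTranspose_eq_transpose_of_trivial]; exact hm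

lemma posDef_of_posSemidef_isUnit {m : 𝕄} (hm : m.PosSemidef) (hu : IsUnit m.det) :
    m.PosDef := by
  exact hm.posDef_iff_isUnit.2 ((Matrix.isUnit_iff_isUnit_det _).2 hu)

lemma sqrt_isUnit_det {B : 𝕄} (hB : B.PosDef) : IsUnit (hB.posSemidef.sqrt).det := by
  have hs2 : hB.posSemidef.sqrt * hB.posSemidef.sqrt = B := hB.posSemidef.sqrt_mul_self
  have hmul : (hB.posSemidef.sqrt).det * (hB.posSemidef.sqrt).det = B.det := by
    rw [← Matrix.det_mul, hs2]
  have hne : (hB.posSemidef.sqrt).det ≠ 0 := by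
    intro h0
    rw [h0, mul_zero] at hmul
    exact hB.det_pos.ne' hmul.symm
  exact hne.isUnit

lemma sqrt_posDef {B : 𝕄} (hB : B.PosDef) : (hB.posSemidef.sqrt).PosDef :=
  posDef_of_posSemidef_isUnit hB.posSemidef.posSemidef_sqrt (sqrt_isUnit_det hB)

-- positive definite quadratic lower bound
lemma posDef_quad_lb {B : 𝕄} (hB : B.PosDef) :
    ∃ c : ℝ, 0 < c ∧ ∀ v : Fin D → ℝ, c * (v ⬝ᵥ v) ≤ v ⬝ᵥ (B *ᵥ v) := by
  classical
  set s := hB.posSemidef.sqrt with hs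
  have hs2 : s * s = B := hB.posSemidef.sqrt_mul_self
  have hssymm : sᵀ = s := isSymm_of_isHermitian hB.posSemidef.posSemidef_sqrt.isHermitian
  have hdets : IsUnit s.det := sqrt_isUnit_det hB
  have hinv : s⁻¹ * s = 1 := Matrix.nonsing_inv_mul s hdets
  have hsinvsymm : (s⁻¹)ᵀ = s⁻¹ := by rw [Matrix.transpose_nonsing_inv, hssymm]
  set K := frob (s⁻¹ : 𝕄) with hK
  refine ⟨(K ^ 2 + 1)⁻¹, by positivity, fun v => ?_⟩
  set P := v ⬝ᵥ v with hPdef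
  set Q := v ⬝ᵥ (B *ᵥ v) with hQdef
  have hvs : ∀ (w : Fin D → ℝ) (m : 𝕄), w ᵥ* m = mᵀ *ᵥ w := fun w m => by
    rw [← Matrix.vecMul_transpose, Matrix.transpose_transpose]
  have hQ : Q = (s *ᵥ v) ⬝ᵥ (s *ᵥ v) := by
    rw [hQdef, ← hs2, ← Matrix.mulVec_mulVec, Matrix.dotProduct_mulVec, hvs v, hssymm]
  have hQ0 : 0 ≤ Q := hQ ▸ dv_self_nonneg _
  have hP0 : 0 ≤ P := dv_self_nonneg _
  have hPle : P ≤ K * (Real.sqrt P * Real.sqrt Q) := by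
    have h1 : P = (s⁻¹ *ᵥ v) ⬝ᵥ (s *ᵥ v) := by
      have : (s⁻¹ *ᵥ v) ⬝ᵥ (s *ᵥ v) = P := by
        rw [Matrix.dotProduct_mulVec, hvs _ s, hssymm, Matrix.mulVec_mulVec,
          Matrix.mul_nonsing_inv s hdets, Matrix.one_mulVec]
      exact this.symm
    have h2 : (s⁻¹ *ᵥ v) ⬝ᵥ (s⁻¹ *ᵥ v) ≤ K ^ 2 * P := mulVec_dot_le _ _
    calc P ≤ Real.sqrt ((s⁻¹ *ᵥ v) ⬝ᵥ (s⁻¹ *ᵥ v)) * Real.sqrt ((s *ᵥ v) ⬝ᵥ (s *ᵥ v)) := by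
          rw [h1]; exact dv_le _ _
      _ ≤ Real.sqrt (K ^ 2 * P) * Real.sqrt Q := by
          rw [hQ]
          exact mul_le_mul_of_nonneg_right (Real.sqrt_le_sqrt h2) (Real.sqrt_nonneg _)
      _ = K * (Real.sqrt P * Real.sqrt Q) := by
          rw [Real.sqrt_mul (by positivity), Real.sqrt_sq (frob_nonneg _), mul_assoc]
  rcases hP0.lt_or_eq with hP | hP
  · -- P > 0
    have hsq : P * P ≤ K ^ 2 * P * Q := by
      have hRHS0 : 0 ≤ K * (Real.sqrt P * Real.sqrt Q) :=
        mul_nonneg (frob_nonneg _) (mul_nonneg (Real.sqrt_nonneg _) (Real.sqrt_nonneg _))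
      have := mul_self_le_mul_self hP0 hPle
      calc P * P ≤ (K * (Real.sqrt P * Real.sqrt Q)) * (K * (Real.sqrt P * Real.sqrt Q)) := this
        _ = K ^ 2 * (Real.sqrt P * Real.sqrt P) * (Real.sqrt Q * Real.sqrt Q) := by ring
        _ = K ^ 2 * P * Q := by rw [Real.mul_self_sqrt hP0, Real.mul_self_sqrt hQ0]
    have hPK : P ≤ K ^ 2 * Q := by
      have := (mul_le_mul_iff_of_pos_right hP).1 (by linarith [hsq] : P * P ≤ (K ^ 2 * Q) * P)
      linarith [this]
    have : P ≤ (K ^ 2 + 1) * Q := by nlinarith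
    calc (K ^ 2 + 1)⁻¹ * P ≤ (K ^ 2 + 1)⁻¹ * ((K ^ 2 + 1) * Q) :=
          mul_le_mul_of_nonneg_left this (by positivity)
      _ = Q := by field_simp
  · rw [← hP, mul_zero]; exact hQ0

-- openness: symmetric matrices close to a PD matrix are PD
lemma posDef_of_close {B x : 𝕄} (hB : B.PosDef) {c : ℝ} (hc : 0 < c)
    (hq : ∀ v : Fin D → ℝ, c * (v ⬝ᵥ v) ≤ v ⬝ᵥ (B *ᵥ v))
    (hx : xᵀ = x) (hd : frob (x - B) < c) : x.PosDef := by
  apply Matrix.PosDef.of_dotProduct_mulVec_pos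
  · rw [Matrix.IsHermitian, Matrix.conjTranspose_eq_transpose_of_trivial, hx]
  · intro v hv
    have hstar : (star v : Fin D → ℝ) = v := by simp
    rw [hstar]
    have hP : 0 < v ⬝ᵥ v := by
      have := Matrix.dotProduct_star_self_pos_iff (v := v).2 hv
      rwa [hstar] at this
    have h1 : v ⬝ᵥ (x *ᵥ v) = v ⬝ᵥ (B *ᵥ v) + v ⬝ᵥ ((x - B) *ᵥ v) := by
      have hBx : B + (x - B) = x := by abel
      rw [← dotProduct_add, ← Matrix.add_mulVec, hBx]
    have h2 := quad_lower (x - B) v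
    have h3 := hq v
    have h4 : frob (x - B) * (v ⬝ᵥ v) < c * (v ⬝ᵥ v) := by
      exact mul_lt_mul_of_pos_right hd hP
    rw [h1]
    nlinarith

end Aux3

section AuxNorm
variable {D : ℕ}
local notation "𝕄" => Matrix (Fin D) (Fin D) ℝ

attribute [local instance] Matrix.frobeniusNormedAddCommGroup Matrix.frobeniusNormedSpace
  Matrix.frobeniusNormedRing Matrix.frobeniusNormedAlgebra

lemma frob_eq_norm (a : 𝕄) : frob a = ‖a‖ := by
  rw [Matrix.frobenius_norm_def, frob, dotp]
  rw [Real.sqrt_eq_rpow]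
  congr 1
  congr 1
  ext i
  congr 1
  ext j
  rw [Real.norm_eq_abs]
  rw [show ((2:ℝ) = ((2:ℕ):ℝ)) from by norm_num, Real.rpow_natCast]
  rw [sq_abs, sq]

lemma frob_mul_le (a b : 𝕄) : frob (a * b) ≤ frob a * frob b := by
  rw [frob_eq_norm, frob_eq_norm, frob_eq_norm]
  exact norm_mul_le a b

end AuxNorm

section AuxSyl
variable {D : ℕ}
local notation "𝕄" => Matrix (Fin D) (Fin D) ℝ

attribute [local instance] Matrix.frobeniusNormedAddCommGroup Matrix.frobeniusNormedSpace
  Matrix.frobeniusNormedRing Matrix.frobeniusNormedAlgebra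

lemma dotp_add (x y z : 𝕄) : dotp x (y + z) = dotp x y + dotp x z := by
  simp [dotp, mul_add, Finset.sum_add_distrib]

lemma frob_zero : frob (0 : 𝕄) = 0 := by simp [frob, dotp]

lemma dotp_conj_left {s B : 𝕄} (hssymm : sᵀ = s) (hs2 : s * s = B) (x : 𝕄) :
    dotp x (B * x) = dotp (s * x) (s * x) := by
  rw [dotp_eq_trace, dotp_eq_trace, Matrix.transpose_mul, hssymm,
    Matrix.mul_assoc, ← Matrix.mul_assoc s s x, hs2]

lemma dotp_conj_right {s B : 𝕄} (hssymm : sᵀ = s) (hs2 : s * s = B) (x : 𝕄) :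
    dotp x (x * B) = dotp (x * s) (x * s) := by
  have hstep : (x * s)ᵀ * (x * s) = s * (xᵀ * (x * s)) := by
    rw [Matrix.transpose_mul, hssymm, Matrix.mul_assoc]
  rw [dotp_eq_trace, dotp_eq_trace, hstep, Matrix.trace_mul_comm s (xᵀ * (x * s)),
    Matrix.mul_assoc, Matrix.mul_assoc, hs2]

lemma sylvester_bound {h B s d a : 𝕄}
    (hB2 : B * B = h) (hs2 : s * s = B) (hssymm : sᵀ = s) (hBsymm : Bᵀ = B)
    (hdets : IsUnit s.det) (heq : B * d + d * B = a) :
    frob d ≤ ((D : ℝ) + 1) ^ 2 * frob a * Real.sqrt (frob h⁻¹) := by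
  have hsinv : s⁻¹ * s = 1 := Matrix.nonsing_inv_mul s hdets
  have hsinvsymm : (s⁻¹)ᵀ = s⁻¹ := by rw [Matrix.transpose_nonsing_inv, hssymm]
  have hBinvsymm : (B⁻¹)ᵀ = B⁻¹ := by rw [Matrix.transpose_nonsing_inv, hBsymm]
  have hdfact : d = s⁻¹ * (s * d) := by
    rw [← Matrix.mul_assoc, hsinv, Matrix.one_mul]
  set u := frob (s * d) with hu
  have hu0 : 0 ≤ u := frob_nonneg _
  have hdle : frob d ≤ frob s⁻¹ * u := by
    conv_lhs => rw [hdfact]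
    exact frob_mul_le _ _
  have hkey : dotp d a = dotp (s * d) (s * d) + dotp (d * s) (d * s) := by
    rw [← heq, dotp_add, dotp_conj_left hssymm hs2, dotp_conj_right hssymm hs2]
  have husq : u ^ 2 ≤ dotp d a := by
    rw [hkey, frob_sq]
    linarith [dotp_self_nonneg (d * s)]
  have hda : dotp d a ≤ frob d * frob a := dotp_le_frob _ _
  -- main intermediate: frob d ≤ frob s⁻¹ ^ 2 * frob a
  have hmain : frob d ≤ frob s⁻¹ ^ 2 * frob a := by
    rcases hu0.lt_or_eq with hu' | hu'
    · have h1 : u ^ 2 ≤ frob s⁻¹ * u * frob a := by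
        calc u ^ 2 ≤ dotp d a := husq
          _ ≤ frob d * frob a := hda
          _ ≤ frob s⁻¹ * u * frob a :=
              mul_le_mul_of_nonneg_right hdle (frob_nonneg _)
      have h2 : u ≤ frob s⁻¹ * frob a := by
        have := (mul_le_mul_iff_of_pos_right hu').1 (by nlinarith : u * u ≤ (frob s⁻¹ * frob a) * u)
        exact this
      calc frob d ≤ frob s⁻¹ * u := hdle
        _ ≤ frob s⁻¹ * (frob s⁻¹ * frob a) :=
            mul_le_mul_of_nonneg_left h2 (frob_nonneg _)
        _ = frob s⁻¹ ^ 2 * frob a := by ring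
    · -- u = 0 : then s * d = 0 hence d = 0
      have hsd : s * d = 0 := by
        apply eq_zero_of_dotp_self
        have := frob_sq (s * d)
        rw [← hu, ← hu'] at this
        simpa using this.symm
      have hd0 : d = 0 := by rw [hdfact, hsd, Matrix.mul_zero]
      rw [hd0, frob_zero]
      exact mul_nonneg (by positivity) (frob_nonneg a)
  -- bound frob s⁻¹ ^ 2
  have hBinv : s⁻¹ * s⁻¹ = B⁻¹ := by rw [← Matrix.mul_inv_rev, hs2]
  have hhinv : B⁻¹ * B⁻¹ = h⁻¹ := by rw [← Matrix.mul_inv_rev, hB2]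
  have hfs : frob s⁻¹ ^ 2 = (B⁻¹).trace := by
    rw [frob_sq_symm hsinvsymm, hBinv]
  have hfB : frob B⁻¹ ^ 2 = (h⁻¹).trace := by
    rw [frob_sq_symm hBinvsymm, hhinv]
  have hDb : Real.sqrt (D : ℝ) ≤ (D : ℝ) + 1 := by
    have h1 : (D : ℝ) ≤ ((D : ℝ) + 1) ^ 2 := by nlinarith [Nat.cast_nonneg (α := ℝ) D]
    calc Real.sqrt (D : ℝ) ≤ Real.sqrt (((D : ℝ) + 1) ^ 2) := Real.sqrt_le_sqrt h1
      _ = (D : ℝ) + 1 := Real.sqrt_sq (by positivity)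
  have htr : frob s⁻¹ ^ 2 ≤ ((D : ℝ) + 1) ^ 2 * Real.sqrt (frob h⁻¹) := by
    have h1 : (B⁻¹).trace ≤ Real.sqrt (D : ℝ) * frob B⁻¹ := trace_le_sqrt_frob _
    have h2 : (h⁻¹).trace ≤ Real.sqrt (D : ℝ) * frob h⁻¹ := trace_le_sqrt_frob _
    have h3 : frob B⁻¹ ≤ ((D : ℝ) + 1) * Real.sqrt (frob h⁻¹) := by
      have h4 : frob B⁻¹ ^ 2 ≤ Real.sqrt (D : ℝ) * frob h⁻¹ := hfB ▸ h2
      calc frob B⁻¹ = Real.sqrt (frob B⁻¹ ^ 2) := (Real.sqrt_sq (frob_nonneg _)).symm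
        _ ≤ Real.sqrt (Real.sqrt (D : ℝ) * frob h⁻¹) := Real.sqrt_le_sqrt h4
        _ = Real.sqrt (Real.sqrt (D : ℝ)) * Real.sqrt (frob h⁻¹) :=
            Real.sqrt_mul (Real.sqrt_nonneg _) _
        _ ≤ ((D : ℝ) + 1) * Real.sqrt (frob h⁻¹) := by
            apply mul_le_mul_of_nonneg_right _ (Real.sqrt_nonneg _)
            calc Real.sqrt (Real.sqrt (D : ℝ)) ≤ Real.sqrt ((D : ℝ) + 1) :=
                  Real.sqrt_le_sqrt hDb
              _ ≤ (D : ℝ) + 1 := by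
                  rw [show ((D:ℝ) + 1) = Real.sqrt (((D:ℝ)+1)^2) from
                    (Real.sqrt_sq (by positivity)).symm]
                  apply Real.sqrt_le_sqrt
                  rw [Real.sqrt_sq (by positivity)]
                  nlinarith [Nat.cast_nonneg (α := ℝ) D]
    calc frob s⁻¹ ^ 2 = (B⁻¹).trace := hfs
      _ ≤ Real.sqrt (D : ℝ) * frob B⁻¹ := h1
      _ ≤ ((D : ℝ) + 1) * (((D : ℝ) + 1) * Real.sqrt (frob h⁻¹)) := by
          apply mul_le_mul hDb h3 (frob_nonneg _) (by positivity)
      _ = ((D : ℝ) + 1) ^ 2 * Real.sqrt (frob h⁻¹) := by ring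
  calc frob d ≤ frob s⁻¹ ^ 2 * frob a := hmain
    _ ≤ (((D : ℝ) + 1) ^ 2 * Real.sqrt (frob h⁻¹)) * frob a :=
        mul_le_mul_of_nonneg_right htr (frob_nonneg _)
    _ = ((D : ℝ) + 1) ^ 2 * frob a * Real.sqrt (frob h⁻¹) := by ring

end AuxSyl

section Main
attribute [local instance] Matrix.frobeniusNormedAddCommGroup Matrix.frobeniusNormedSpace
  Matrix.frobeniusNormedRing Matrix.frobeniusNormedAlgebra

theorem stmt_5_aux {D : ℕ} :
    ∃ C : ℝ, 0 < C ∧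
      ∀ h : Matrix (Fin D) (Fin D) ℝ, h.PosDef →
        ∀ a : Matrix (Fin D) (Fin D) ℝ, a.IsSymm →
          ∃ d : Matrix (Fin D) (Fin D) ℝ,
            Tendsto (fun ε : ℝ => ε⁻¹ • (msqrt (h + ε • a) - msqrt h)) (𝓝[≠] 0) (𝓝 d) ∧
            frob d ≤ C * frob a * Real.sqrt (frob h⁻¹) := by
  classical
  refine ⟨((D : ℝ) + 1) ^ 2 + 1, by positivity, fun h hh a ha => ?_⟩
  have hps : h.PosSemidef := hh.posSemidef
  set B := hps.sqrt with hBdef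
  have hB2 : B * B = h := hps.sqrt_mul_self
  have hBpsd : B.PosSemidef := hps.posSemidef_sqrt
  have hBpd : B.PosDef := posDef_of_posSemidef_isUnit hBpsd (sqrt_isUnit_det hh)
  have hBsymm : Bᵀ = B := isSymm_of_isHermitian hBpsd.isHermitian
  have hhsymm : hᵀ = h := isSymm_of_isHermitian hh.isHermitian
  -- fourth root
  set s := hBpd.posSemidef.sqrt with hsdef
  have hs2 : s * s = B := hBpd.posSemidef.sqrt_mul_self
  have hssymm : sᵀ = s := isSymm_of_isHermitian hBpd.posSemidef.posSemidef_sqrt.isHermitian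
  have hdets : IsUnit s.det := sqrt_isUnit_det hBpd
  -- the Sylvester operator
  set idm : Matrix (Fin D) (Fin D) ℝ →L[ℝ] Matrix (Fin D) (Fin D) ℝ :=
    ContinuousLinearMap.id ℝ _ with hidm
  set L : Matrix (Fin D) (Fin D) ℝ →L[ℝ] Matrix (Fin D) (Fin D) ℝ :=
    B • idm + idm.smulRight B with hLdef
  have hLapply : ∀ x, L x = B * x + x * B := by
    intro x
    simp [hLdef, hidm, ContinuousLinearMap.smulRight_apply, smul_eq_mul]
  have hderiv : HasStrictFDerivAt (fun x : Matrix (Fin D) (Fin D) ℝ => x * x) L B := by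
    have := (hasStrictFDerivAt_id (𝕜 := ℝ) B).mul' (hasStrictFDerivAt_id B)
    exact this
  -- injectivity of L
  have hker : ∀ x : Matrix (Fin D) (Fin D) ℝ, L x = 0 → x = 0 := by
    intro x hx
    rw [hLapply] at hx
    have e0 : dotp x (B * x + x * B) = 0 := by rw [hx]; simp [dotp]
    rw [dotp_add, dotp_conj_left hssymm hs2, dotp_conj_right hssymm hs2] at e0
    have h1 : dotp (s * x) (s * x) = 0 :=
      le_antisymm (by linarith [dotp_self_nonneg (x * s)]) (dotp_self_nonneg _)
    have hsx : s * x = 0 := eq_zero_of_dotp_self _ h1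
    calc x = s⁻¹ * (s * x) := by
          rw [← Matrix.mul_assoc, Matrix.nonsing_inv_mul s hdets, Matrix.one_mul]
      _ = 0 := by rw [hsx, Matrix.mul_zero]
  have hLinj : Function.Injective L := by
    intro x y hxy
    have h0 : L (x - y) = 0 := by rw [map_sub, hxy, sub_self]
    have := hker _ h0
    exact sub_eq_zero.1 this
  have hLsurj : Function.Surjective (L : Matrix (Fin D) (Fin D) ℝ →ₗ[ℝ] Matrix (Fin D) (Fin D) ℝ) :=
    LinearMap.injective_iff_surjective.1 hLinj
  let Leq : Matrix (Fin D) (Fin D) ℝ ≃ₗ[ℝ] Matrix (Fin D) (Fin D) ℝ :=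
    LinearEquiv.ofBijective (L : Matrix (Fin D) (Fin D) ℝ →ₗ[ℝ] Matrix (Fin D) (Fin D) ℝ)
      ⟨hLinj, hLsurj⟩
  let L' : Matrix (Fin D) (Fin D) ℝ ≃L[ℝ] Matrix (Fin D) (Fin D) ℝ :=
    Leq.toContinuousLinearEquiv
  have hL' : (L' : Matrix (Fin D) (Fin D) ℝ →L[ℝ] Matrix (Fin D) (Fin D) ℝ) = L := by
    ext x; rfl
  have hF : HasStrictFDerivAt (fun x : Matrix (Fin D) (Fin D) ℝ => x * x)
      (L' : Matrix (Fin D) (Fin D) ℝ →L[ℝ] Matrix (Fin D) (Fin D) ℝ) B := by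
    rw [hL']; exact hderiv
  set f : Matrix (Fin D) (Fin D) ℝ → Matrix (Fin D) (Fin D) ℝ := fun x => x * x with hfdef
  set gi := hF.localInverse f L' B with hgdef
  have hfB : f B = h := hB2
  have hleft : ∀ᶠ x in 𝓝 B, gi (f x) = x := hF.eventually_left_inverse
  have hright : ∀ᶠ k in 𝓝 h, f (gi k) = k := by
    have := hF.eventually_right_inverse
    rwa [hfB] at this
  have hgB : gi h = B := by
    have := hF.localInverse_apply_image
    rwa [hfB] at this
  have gtendsto : Tendsto gi (𝓝 h) (𝓝 B) := by
    have := hF.localInverse_tendsto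
    rwa [hfB] at this
  -- symmetry of the local inverse
  have htB : Tendsto (fun x : Matrix (Fin D) (Fin D) ℝ => xᵀ) (𝓝 B) (𝓝 B) := by
    have hcont : Continuous (fun x : Matrix (Fin D) (Fin D) ℝ => xᵀ) :=
      continuous_id.matrix_transpose
    have := hcont.tendsto B
    rwa [hBsymm] at this
  have huniq : ∀ᶠ k in 𝓝 h, (gi kᵀ)ᵀ = gi k := by
    have h1 : ∀ᶠ x in 𝓝 B, (fun k => (gi kᵀ)ᵀ) (f x) = x := by
      filter_upwards [htB.eventually hleft] with x hx
      show (gi (x * x)ᵀ)ᵀ = x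
      rw [Matrix.transpose_mul]
      have : gi (xᵀ * xᵀ) = xᵀ := hx
      rw [this, Matrix.transpose_transpose]
    have := hF.localInverse_unique (g := fun k => (gi kᵀ)ᵀ) h1
    rw [hfB] at this
    exact this.mono fun k hk => hk
  -- closeness
  obtain ⟨c, hc, hq⟩ := posDef_quad_lb hBpd
  have hclose : ∀ᶠ k in 𝓝 h, frob (gi k - B) < c := by
    have h0 : Tendsto (fun k => ‖gi k - B‖) (𝓝 h) (𝓝 (0:ℝ)) := by
      have h1 : Tendsto (fun k => gi k - B) (𝓝 h) (𝓝 (B - B)) :=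
        gtendsto.sub (tendsto_const_nhds (x := B))
      rw [sub_self] at h1
      simpa using h1.norm
    have := h0.eventually_lt_const hc
    exact this.mono fun k hk => by rwa [frob_eq_norm]
  -- eventually msqrt = g on symmetric matrices
  have hkey : ∀ᶠ k in 𝓝 h, (kᵀ = k → msqrt k = gi k) := by
    filter_upwards [hright, huniq, hclose] with k h1 h2 h3 hk
    have hgsymm : (gi k)ᵀ = gi k := by rw [hk] at h2; exact h2
    have hgpd : (gi k).PosDef := posDef_of_close hBpd hc hq hgsymm h3
    have hmul : gi k * gi k = k := h1
    have hkpsd : k.PosSemidef := by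
      have := hgpd.posSemidef.pow 2
      rwa [sq, hmul] at this
    have : gi k = hkpsd.sqrt := hgpd.posSemidef.eq_sqrt_of_sq_eq hkpsd (by rw [sq, hmul])
    rw [msqrt, dif_pos hkpsd]
    exact this.symm
  -- path
  have hpath : Tendsto (fun ε : ℝ => h + ε • a) (𝓝 0) (𝓝 h) := by
    have hcont : Continuous fun ε : ℝ => h + ε • a :=
      continuous_const.add (continuous_id.smul continuous_const)
    have := hcont.tendsto 0
    simpa using this
  have hsymmk : ∀ ε : ℝ, (h + ε • a)ᵀ = h + ε • a := by
    intro ε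
    rw [Matrix.transpose_add, Matrix.transpose_smul, hhsymm, ha]
  have hev : ∀ᶠ ε : ℝ in 𝓝 0, msqrt (h + ε • a) = gi (h + ε • a) :=
    (hpath.eventually hkey).mono fun ε hε => hε (hsymmk ε)
  -- derivative along the path
  set d := L'.symm a with hddef
  have h00 : h + (0 : ℝ) • a = h := by simp
  have hgder : HasFDerivAt gi
      (L'.symm : Matrix (Fin D) (Fin D) ℝ →L[ℝ] Matrix (Fin D) (Fin D) ℝ)
      (h + (0 : ℝ) • a) := by
    rw [h00]
    have := hF.to_localInverse
    rw [hfB] at this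
    exact this.hasFDerivAt
  have hline : HasDerivAt (fun ε : ℝ => h + ε • a) a 0 := by
    exact (((hasDerivAt_id (0 : ℝ)).smul_const a).const_add h).congr_deriv (one_smul _ _)
  have hcomp : HasDerivAt (fun ε : ℝ => gi (h + ε • a)) d 0 :=
    by have := hgder.comp_hasDerivAt (x := (0:ℝ)) hline; exact this
  replace hcomp := (hasDerivAt_iff_tendsto_slope (F := Matrix (Fin D) (Fin D) ℝ)).1 hcomp
  have hmsqrth : msqrt h = B := by rw [msqrt, dif_pos hps]; rfl
  refine ⟨d, ?_, ?_⟩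
  · apply hcomp.congr'
    have hev' : ∀ᶠ ε in 𝓝[≠] (0 : ℝ), msqrt (h + ε • a) = gi (h + ε • a) :=
      hev.filter_mono nhdsWithin_le_nhds
    filter_upwards [hev'] with ε hε
    rw [slope_def_module]
    rw [sub_zero, hε, h00, hgB, hmsqrth]
  · -- the bound
    have hLd : B * d + d * B = a := by
      have h1 : L' d = a := by rw [hddef]; exact L'.apply_symm_apply a
      have h2 : L d = a := by rw [← hL']; exact h1
      rw [← hLapply d, h2]
    have := sylvester_bound hB2 hs2 hssymm hBsymm hdets hLd
    calc frob d ≤ ((D : ℝ) + 1) ^ 2 * frob a * Real.sqrt (frob h⁻¹) := this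
      _ ≤ (((D : ℝ) + 1) ^ 2 + 1) * frob a * Real.sqrt (frob h⁻¹) := by
          have h1 : (0:ℝ) ≤ frob a * Real.sqrt (frob h⁻¹) :=
            mul_nonneg (frob_nonneg _) (Real.sqrt_nonneg _)
          nlinarith
end Main

/-- On the open cone of positive definite matrices, the square root map has directional
derivatives `D_{√h}(a)` in every symmetric direction `a`, and these satisfy
`|D_{√h}(a)| ≤ C |a| |h⁻¹|^{1/2}` for a constant `C` depending only on `D`. -/
theorem stmt_5 {D : ℕ} :
    ∃ C : ℝ, 0 < C ∧
      ∀ h : Matrix (Fin D) (Fin D) ℝ, h.PosDef →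
        ∀ a : Matrix (Fin D) (Fin D) ℝ, a.IsSymm →
          ∃ d : Matrix (Fin D) (Fin D) ℝ,
            Tendsto (fun ε : ℝ => ε⁻¹ • (msqrt (h + ε • a) - msqrt h)) (𝓝[≠] 0) (𝓝 d) ∧
            frob d ≤ C * frob a * Real.sqrt (frob h⁻¹) :=
  stmt_5_aux
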